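/- Let n ≥ 2 and define w(x₁,…,xₙ) = 1/(1+|xₙ|)². Then w satisfies the dyadic reverse doubling condition on ℝⁿ with constant d = 2^{n−1}: for any dyadic rectangles I ⊂ J with sides parallel to the axes such that I is obtained from J by halving every side (so |I| = 2^{−n}|J|), one has 2^{n−1} ∫_I w dx ≤ ∫_J w dx. -/

import Mathlib

open MeasureTheory Set

noncomputable section

lemma aux_pi_integral {n : ℕ} (m : Fin n) (s : Fin n → Set ℝ)
    (hs : ∀ i, MeasurableSet (s i)) (hfin : ∀ i, volume (s i) < ⊤)
    (f : ℝ → ℝ) (hf : IntegrableOn f (s m)) :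
    ∫ x in Set.univ.pi s, f (x m) =
      (∏ i ∈ Finset.univ.erase m, (volume (s i)).toReal) * ∫ t in s m, f t := by
  have hgi : ∀ i : Fin n, Integrable ((s i).indicator (fun t => if i = m then f t else 1)) := by
    intro i
    rw [integrable_indicator_iff (hs i)]
    by_cases h : i = m
    · subst h; simpa using hf
    · simp only [h, if_false]
      exact integrableOn_const (hfin i).ne
  have key : (Set.univ.pi s).indicator (fun x : Fin n → ℝ => f (x m)) =
      fun x => ∏ i, (s i).indicator (fun t => if i = m then f t else 1) (x i) := by
    funext x
    by_cases hx : x ∈ Set.univ.pi s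
    · rw [Set.indicator_of_mem hx]
      have : ∀ i, (s i).indicator (fun t => if i = m then f t else 1) (x i)
          = if i = m then f (x i) else 1 := fun i =>
        Set.indicator_of_mem (hx i (Set.mem_univ i)) _
      simp only [this]
      simp
    · rw [Set.indicator_of_notMem hx]
      rw [Set.mem_univ_pi] at hx
      push_neg at hx
      obtain ⟨i, hi⟩ := hx
      refine (Finset.prod_eq_zero (Finset.mem_univ i) ?_).symm
      exact Set.indicator_of_notMem hi _
  rw [← integral_indicator (MeasurableSet.univ_pi hs), key,
    MeasureTheory.integral_fintype_prod_volume_eq_prod (𝕜 := ℝ)]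
  have : ∀ i : Fin n, (∫ t, (s i).indicator (fun t => if i = m then f t else 1) t)
      = if i = m then ∫ t in s m, f t else (volume (s i)).toReal := by
    intro i
    rw [integral_indicator (hs i)]
    by_cases h : i = m
    · subst h; simp
    · simp [h, Measure.restrict_apply_univ, Measure.real]
  simp only [this]
  rw [← Finset.mul_prod_erase Finset.univ _ (Finset.mem_univ m), if_pos rfl]
  rw [Finset.prod_congr rfl (fun i hi => if_neg (Finset.ne_of_mem_erase hi))]
  ring

theorem stmt6 (n : ℕ) (hn : 2 ≤ n)
    (w : (Fin n → ℝ) → ℝ)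
    (hw : w = fun x => (1 + |x ⟨n - 1, by omega⟩|) ^ (-2 : ℤ))
    (k : Fin n → ℤ) (a b : Fin n → ℤ)
    (I J : Set (Fin n → ℝ))
    (hI : I = Set.univ.pi fun i =>
      Set.Ico ((a i : ℝ) * 2 ^ (k i)) (((a i : ℝ) + 1) * 2 ^ (k i)))
    (hJ : J = Set.univ.pi fun i =>
      Set.Ico ((b i : ℝ) * 2 ^ (k i + 1)) (((b i : ℝ) + 1) * 2 ^ (k i + 1)))
    (hIJ : I ⊆ J) :
    2 ^ (n - 1) * ∫ x in I, w x ≤ ∫ x in J, w x := by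
  have hn0 : 0 < n := by omega
  set m : Fin n := ⟨n - 1, by omega⟩ with hm
  set f : ℝ → ℝ := fun t => (1 + |t|) ^ (-2 : ℤ) with hf
  have hfc : Continuous f := by
    apply Continuous.zpow₀ (continuous_const.add continuous_abs)
    intro t; left; exact (add_pos_of_pos_of_nonneg one_pos (abs_nonneg t)).ne'
  have hfnn : ∀ t, 0 ≤ f t := fun t => zpow_nonneg (by positivity) _
  set sI : Fin n → Set ℝ := fun i =>
    Set.Ico ((a i : ℝ) * 2 ^ (k i)) (((a i : ℝ) + 1) * 2 ^ (k i)) with hsI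
  set sJ : Fin n → Set ℝ := fun i =>
    Set.Ico ((b i : ℝ) * 2 ^ (k i + 1)) (((b i : ℝ) + 1) * 2 ^ (k i + 1)) with hsJ
  have hlt : ∀ i, (a i : ℝ) * 2 ^ (k i) < ((a i : ℝ) + 1) * 2 ^ (k i) := fun i =>
    mul_lt_mul_of_pos_right (by linarith) (zpow_pos two_pos _)
  have hsub : ∀ i, sI i ⊆ sJ i := by
    rw [hI, hJ] at hIJ
    rcases Set.univ_pi_subset_univ_pi_iff.1 hIJ with h | ⟨i, hi⟩
    · exact h
    · exact absurd hi (Set.Nonempty.ne_empty ⟨_, Set.left_mem_Ico.2 (hlt i)⟩)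
  have hintJ : ∀ i, IntegrableOn f (sJ i) :=
    fun i => (hfc.integrableOn_Icc).mono_set Set.Ico_subset_Icc_self
  have hintI : IntegrableOn f (sI m) := (hintJ m).mono_set (hsub m)
  have hEI := aux_pi_integral m sI (fun i => measurableSet_Ico)
    (fun i => by rw [hsI]; simp [Real.volume_Ico]) f hintI
  have hEJ := aux_pi_integral m sJ (fun i => measurableSet_Ico)
    (fun i => by rw [hsJ]; simp [Real.volume_Ico]) f (hintJ m)
  have hwI : (∫ x in I, w x) = ∫ x in Set.univ.pi sI, f (x m) := by
    rw [hI, hw]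
  have hwJ : (∫ x in J, w x) = ∫ x in Set.univ.pi sJ, f (x m) := by
    rw [hJ, hw]
  rw [hwI, hwJ, hEI, hEJ]
  have hvolI : ∀ i, (volume (sI i)).toReal = (2:ℝ) ^ (k i) := by
    intro i
    rw [hsI]
    simp only [Real.volume_Ico]
    rw [show ((a i : ℝ) + 1) * 2 ^ (k i) - (a i : ℝ) * 2 ^ (k i) = 2 ^ (k i) by ring,
      ENNReal.toReal_ofReal (zpow_pos two_pos _).le]
  have hvolJ : ∀ i, (volume (sJ i)).toReal = (2:ℝ) ^ (k i) * 2 := by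
    intro i
    rw [hsJ]
    simp only [Real.volume_Ico]
    rw [show ((b i : ℝ) + 1) * 2 ^ (k i + 1) - (b i : ℝ) * 2 ^ (k i + 1) = 2 ^ (k i) * 2 by
        rw [zpow_add₀ (two_ne_zero) (k i) 1]; ring,
      ENNReal.toReal_ofReal (by positivity)]
  rw [Finset.prod_congr rfl (fun i _ => hvolI i), Finset.prod_congr rfl (fun i _ => hvolJ i),
    Finset.prod_mul_distrib, Finset.prod_const,
    Finset.card_erase_of_mem (Finset.mem_univ m), Finset.card_univ, Fintype.card_fin]
  have hAB : (∫ t in sI m, f t) ≤ ∫ t in sJ m, f t :=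
    setIntegral_mono_set (hintJ m) (Filter.Eventually.of_forall hfnn)
      ((hsub m).eventuallyLE)
  have hP : (0:ℝ) ≤ ∏ i ∈ Finset.univ.erase m, (2:ℝ) ^ (k i) :=
    Finset.prod_nonneg fun i _ => (zpow_pos two_pos _).le
  calc 2 ^ (n - 1) * ((∏ i ∈ Finset.univ.erase m, (2:ℝ) ^ (k i)) * ∫ t in sI m, f t)
      = (∏ i ∈ Finset.univ.erase m, (2:ℝ) ^ (k i)) * 2 ^ (n - 1) * ∫ t in sI m, f t := by ring
    _ ≤ (∏ i ∈ Finset.univ.erase m, (2:ℝ) ^ (k i)) * 2 ^ (n - 1) * ∫ t in sJ m, f t := by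
        apply mul_le_mul_of_nonneg_left hAB (by positivity)
    _ = (∏ i ∈ Finset.univ.erase m, (2:ℝ) ^ (k i)) * 2 ^ (n - 1) * ∫ t in sJ m, f t := rfl
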